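/- arXiv:1806.10660 — 2 statements merged into one kernel-verified Lean document; each statement's English description precedes it below -/
import Mathlib

section
/- Assume unit costs. For every j ∈ {1,…,B} and every permutation σ of Fin n, C₁^j(σ¹) ≤ C₁^j(σ); that is, among all permutations, a permutation listing the indices in nonincreasing order of p i minimizes the expected number of queries needed, on assignments of block M^j, until α_j true bits have been observed. -/
open Finset

/-- Number of true bits of an assignment. -/
def N1 {n : ℕ} (a : Fin n → Bool) : ℕ :=
  (Finset.univ.filter (fun i => a i = true)).card

/-- Probability of an assignment. -/
noncomputable def pr {n : ℕ} (p : Fin n → ℝ) (a : Fin n → Bool) : ℝ :=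
  ∏ i, if a i then p i else 1 - p i

/-- Least `k` such that the first `k` entries of `l` contain at least `m`
indices selected by `sel`. -/
noncomputable def stopCount {n : ℕ} (sel : Fin n → Bool) (m : ℕ) (l : List (Fin n)) : ℕ :=
  sInf {k | m ≤ ((l.take k).filter sel).length}

/-- `C₁^j(σ)`: expected number of queries, over the block `{a | αj ≤ N₁(a) < βj}`,
until `αj` ones have been observed, querying in the order `σ(0), σ(1), …`. -/
noncomputable def C1 {n : ℕ} (p : Fin n → ℝ) (αj βj : ℕ) (σ : Equiv.Perm (Fin n)) : ℝ :=
  ∑ a ∈ Finset.univ.filter (fun a : Fin n → Bool => αj ≤ N1 a ∧ N1 a < βj),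
    (stopCount a αj (List.ofFn (fun t => σ t)) : ℝ) * pr p a


noncomputable def cnt {n : ℕ} (b : Fin n → Bool) (f : Fin n → Fin n) (k : ℕ) : ℕ :=
  (Finset.univ.filter (fun t : Fin n => t.val < k ∧ b (f t) = true)).card

lemma cnt_eq {n : ℕ} (b : Fin n → Bool) (f : Fin n → Fin n) (k : ℕ) :
    (((List.ofFn f).take k).filter b).length = cnt b f k := by
  induction k with
  | zero => simp [cnt]
  | succ k ih =>
    rcases le_or_gt n k with h | h
    · have h1 : (List.ofFn f).take (k+1) = (List.ofFn f).take k := by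
        rw [List.take_of_length_le (by simpa using h.trans (Nat.le_succ k)),
          List.take_of_length_le (by simpa using h)]
      rw [h1, ih]
      unfold cnt
      apply congrArg
      apply Finset.filter_congr
      intro t _
      have : t.val < k := lt_of_lt_of_le t.isLt h
      simp [this, lt_of_lt_of_le this (Nat.le_succ k)]
    · have h1 : (List.ofFn f).take (k+1) = (List.ofFn f).take k ++ [f ⟨k, h⟩] := by
        rw [List.take_succ]
        simp [List.getElem?_ofFn, h]
      rw [h1, List.filter_append, List.length_append, ih]
      unfold cnt
      have h2 : (Finset.univ.filter (fun t : Fin n => t.val < k + 1 ∧ b (f t) = true)) =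
          (Finset.univ.filter (fun t : Fin n => t.val < k ∧ b (f t) = true)) ∪
          (Finset.univ.filter (fun t : Fin n => t = ⟨k, h⟩ ∧ b (f t) = true)) := by
        ext t
        simp only [Finset.mem_filter, Finset.mem_union, Finset.mem_univ, true_and]
        constructor
        · rintro ⟨hk, hb⟩
          rcases Nat.lt_succ_iff_lt_or_eq.mp hk with h' | h'
          · exact Or.inl ⟨h', hb⟩
          · exact Or.inr ⟨Fin.ext h', hb⟩
        · rintro (⟨hk, hb⟩ | ⟨hk, hb⟩)
          · exact ⟨Nat.lt_succ_of_lt hk, hb⟩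
          · exact ⟨by simp [hk], hb⟩
      have hsing : ∀ hb : Prop, ∀ _ : Decidable hb, True := fun _ _ => trivial
      rw [h2, Finset.card_union_of_disjoint]
      · congr 1
        by_cases hb : b (f ⟨k, h⟩) = true
        · have : (Finset.univ.filter (fun t : Fin n => t = ⟨k, h⟩ ∧ b (f t) = true)) = {⟨k, h⟩} := by
            ext t
            simp only [Finset.mem_filter, Finset.mem_univ, true_and, Finset.mem_singleton]
            constructor
            · exact fun ht => ht.1
            · rintro rfl; exact ⟨rfl, hb⟩
          simp [this, hb]
        · have : (Finset.univ.filter (fun t : Fin n => t = ⟨k, h⟩ ∧ b (f t) = true)) = ∅ := by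
            ext t
            simp only [Finset.mem_filter, Finset.mem_univ, true_and, Finset.notMem_empty,
              iff_false, not_and]
            rintro rfl; exact hb
          simp [this, hb]
      · rw [Finset.disjoint_left]
        intro t ht1 ht2
        simp only [Finset.mem_filter, Finset.mem_univ, true_and] at ht1 ht2
        rw [ht2.1] at ht1
        exact absurd ht1.1 (lt_irrefl k)

lemma cnt_mono {n : ℕ} (b : Fin n → Bool) (f : Fin n → Fin n) {k k' : ℕ} (h : k ≤ k') :
    cnt b f k ≤ cnt b f k' :=
  Finset.card_le_card (by
    intro t ht
    simp only [Finset.mem_filter, Finset.mem_univ, true_and] at *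
    exact ⟨lt_of_lt_of_le ht.1 h, ht.2⟩)

lemma cnt_top {n : ℕ} (b : Fin n → Bool) (e : Equiv.Perm (Fin n)) :
    cnt b e n = N1 b := by
  unfold cnt N1
  rw [Finset.card_bij' (fun t _ => e t) (fun t _ => e.symm t)]
  · intro t ht
    simp only [Finset.mem_filter, Finset.mem_univ, true_and] at *
    exact ht.2
  · intro t ht
    simp only [Finset.mem_filter, Finset.mem_univ, true_and] at *
    exact ⟨(e.symm t).isLt, by simpa using ht⟩
  · intro t _; simp
  · intro t _; simp

lemma stopCount_eq {n : ℕ} (b : Fin n → Bool) (m : ℕ) (e : Equiv.Perm (Fin n))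
    (hm : m ≤ N1 b) :
    stopCount b m (List.ofFn (fun t => e t)) =
      ((Finset.range n).filter (fun k => cnt b (⇑e) k < m)).card := by
  unfold stopCount
  have hS : ∀ k, (m ≤ (((List.ofFn (fun t => e t)).take k).filter b).length) ↔ m ≤ cnt b (⇑e) k := by
    intro k; rw [cnt_eq]
  have hne : (n : ℕ) ∈ {k | m ≤ (((List.ofFn (fun t => e t)).take k).filter b).length} := by
    rw [Set.mem_setOf_eq, hS, cnt_top]; exact hm
  set k0 := sInf {k | m ≤ (((List.ofFn (fun t => e t)).take k).filter b).length} with hk0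
  have hk0mem : m ≤ cnt b (⇑e) k0 := by
    have := Nat.sInf_mem ⟨n, hne⟩
    rwa [Set.mem_setOf_eq, hS] at this
  have hk0le : k0 ≤ n := Nat.sInf_le hne
  have : ((Finset.range n).filter (fun k => cnt b (⇑e) k < m)) = Finset.range k0 := by
    ext k
    simp only [Finset.mem_filter, Finset.mem_range]
    constructor
    · rintro ⟨-, hlt⟩
      by_contra hk
      push_neg at hk
      exact absurd (le_trans hk0mem (cnt_mono b (⇑e) hk)) (not_le.mpr hlt)
    · intro hk
      refine ⟨lt_of_lt_of_le hk hk0le, ?_⟩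
      by_contra hc
      push_neg at hc
      exact absurd (Nat.sInf_le (by rw [Set.mem_setOf_eq, hS]; exact hc)) (not_le.mpr hk)
  rw [this, Finset.card_range]

lemma N1_comp {n : ℕ} (a : Fin n → Bool) (e : Equiv.Perm (Fin n)) :
    N1 (a ∘ e) = N1 a := by
  unfold N1
  apply Finset.card_bij' (fun t _ => e t) (fun t _ => e.symm t)
  · intro t ht
    simpa using (Finset.mem_filter.mp ht).2
  · intro t ht
    simp only [Finset.mem_filter, Finset.mem_univ, true_and, Function.comp_apply] at *
    simpa using ht
  · intro t _; simp
  · intro t _; simp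

lemma pr_comp {n : ℕ} (p : Fin n → ℝ) (a : Fin n → Bool) (e : Equiv.Perm (Fin n)) :
    pr (p ∘ e) (a ∘ e) = pr p a := by
  unfold pr
  exact Equiv.prod_comp e (fun i => if a i then p i else 1 - p i)

lemma stopCount_comp {n : ℕ} (a : Fin n → Bool) (m : ℕ) (e : Equiv.Perm (Fin n)) :
    stopCount (a ∘ e) m (List.ofFn (fun t => (1 : Equiv.Perm (Fin n)) t)) =
      stopCount a m (List.ofFn (fun t => e t)) := by
  unfold stopCount
  congr 1
  ext k
  rw [Set.mem_setOf_eq, Set.mem_setOf_eq, cnt_eq, cnt_eq]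
  unfold cnt
  have : (Finset.univ.filter (fun t : Fin n => t.val < k ∧ (a ∘ ⇑e) ((1 : Equiv.Perm (Fin n)) t) = true)) =
      (Finset.univ.filter (fun t : Fin n => t.val < k ∧ a (e t) = true)) := by
    apply Finset.filter_congr; intro t _; simp
  rw [this]

lemma C1_comp {n : ℕ} (p : Fin n → ℝ) (m β : ℕ) (e : Equiv.Perm (Fin n)) :
    C1 p m β e = C1 (p ∘ e) m β 1 := by
  unfold C1
  apply Finset.sum_nbij' (fun a => a ∘ e) (fun a => a ∘ ⇑e⁻¹)
  · intro a ha
    simp only [Finset.mem_filter, Finset.mem_univ, true_and, N1_comp] at *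
    exact ha
  · intro a ha
    simp only [Finset.mem_filter, Finset.mem_univ, true_and, N1_comp] at *
    exact ha
  · intro a _
    funext t; simp
  · intro a _
    funext t; simp
  · intro a _
    rw [stopCount_comp, pr_comp]

lemma C1_expand {n : ℕ} (p : Fin n → ℝ) (m β : ℕ) (e : Equiv.Perm (Fin n)) :
    C1 p m β e = ∑ k ∈ Finset.range n,
      ∑ a ∈ Finset.univ.filter (fun a : Fin n → Bool => m ≤ N1 a ∧ N1 a < β),
        (if cnt a (⇑e) k < m then (1:ℝ) else 0) * pr p a := by
  rw [Finset.sum_comm]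
  unfold C1
  apply Finset.sum_congr rfl
  intro a ha
  simp only [Finset.mem_filter, Finset.mem_univ, true_and] at ha
  rw [stopCount_eq a m e ha.1]
  rw [Finset.card_filter]
  push_cast
  rw [Finset.sum_mul]

lemma pr_nonneg {n : ℕ} {q : Fin n → ℝ} (hq : ∀ i, 0 ≤ q i ∧ q i ≤ 1) (a : Fin n → Bool) :
    0 ≤ pr q a := by
  apply Finset.prod_nonneg
  intro i _
  rcases hq i with ⟨h0, h1⟩
  split_ifs <;> linarith

lemma pr_split {n : ℕ} (q : Fin n → ℝ) (a : Fin n → Bool) {t0 t1 : Fin n} (hne : t0 ≠ t1) :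
    pr q a = (if a t0 then q t0 else 1 - q t0) * ((if a t1 then q t1 else 1 - q t1) *
      ∏ i ∈ (Finset.univ.erase t0).erase t1, (if a i then q i else 1 - q i)) := by
  unfold pr
  rw [← Finset.mul_prod_erase Finset.univ _ (Finset.mem_univ t0),
    ← Finset.mul_prod_erase (Finset.univ.erase t0) _
      (Finset.mem_erase.mpr ⟨hne.symm, Finset.mem_univ t1⟩)]

lemma pr_swap_le {n : ℕ} {q : Fin n → ℝ} (hq : ∀ i, 0 ≤ q i ∧ q i ≤ 1) {t0 t1 : Fin n}
    (hne : t0 ≠ t1) (hle : q t0 ≤ q t1) (a : Fin n → Bool)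
    (h0 : a t0 = true) (h1 : a t1 = false) :
    pr q a ≤ pr q (a ∘ ⇑(Equiv.swap t0 t1)) := by
  have hr : 0 ≤ ∏ i ∈ (Finset.univ.erase t0).erase t1, (if a i then q i else 1 - q i) := by
    apply Finset.prod_nonneg
    intro i _
    rcases hq i with ⟨h0', h1'⟩
    split_ifs <;> linarith
  have hrest : ∀ i ∈ (Finset.univ.erase t0).erase t1,
      (if (a ∘ ⇑(Equiv.swap t0 t1)) i then q i else 1 - q i) = (if a i then q i else 1 - q i) := by
    intro i hi
    simp only [Finset.mem_erase, Finset.mem_univ] at hi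
    simp [Function.comp_apply, Equiv.swap_apply_of_ne_of_ne hi.2.1 hi.1]
  rw [pr_split q a hne, pr_split q (a ∘ ⇑(Equiv.swap t0 t1)) hne,
    Finset.prod_congr rfl hrest]
  simp only [Function.comp_apply, Equiv.swap_apply_left, Equiv.swap_apply_right, h0, h1,
    Bool.false_eq_true, if_true, if_false]
  set r := ∏ i ∈ (Finset.univ.erase t0).erase t1, (if a i then q i else 1 - q i)
  have key : (1 - q t0) * (q t1 * r) - q t0 * ((1 - q t1) * r) = (q t1 - q t0) * r := by ring
  nlinarith [mul_nonneg (sub_nonneg.mpr hle) hr]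

lemma cnt_succ {n : ℕ} (b : Fin n → Bool) (f : Fin n → Fin n) {k : ℕ} (h : k < n) :
    cnt b f (k + 1) = cnt b f k + (if b (f ⟨k, h⟩) then 1 else 0) := by
  unfold cnt
  have h2 : (Finset.univ.filter (fun t : Fin n => t.val < k + 1 ∧ b (f t) = true)) =
      (Finset.univ.filter (fun t : Fin n => t.val < k ∧ b (f t) = true)) ∪
      (Finset.univ.filter (fun t : Fin n => t = ⟨k, h⟩ ∧ b (f t) = true)) := by
    ext t
    simp only [Finset.mem_filter, Finset.mem_union, Finset.mem_univ, true_and]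
    constructor
    · rintro ⟨hk, hb⟩
      rcases Nat.lt_succ_iff_lt_or_eq.mp hk with h' | h'
      · exact Or.inl ⟨h', hb⟩
      · exact Or.inr ⟨Fin.ext h', hb⟩
    · rintro (⟨hk, hb⟩ | ⟨hk, hb⟩)
      · exact ⟨Nat.lt_succ_of_lt hk, hb⟩
      · exact ⟨by simp [hk], hb⟩
  rw [h2, Finset.card_union_of_disjoint]
  · congr 1
    by_cases hb : b (f ⟨k, h⟩) = true
    · have : (Finset.univ.filter (fun t : Fin n => t = ⟨k, h⟩ ∧ b (f t) = true)) = {⟨k, h⟩} := by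
        ext t
        simp only [Finset.mem_filter, Finset.mem_univ, true_and, Finset.mem_singleton]
        constructor
        · exact fun ht => ht.1
        · rintro rfl; exact ⟨rfl, hb⟩
      simp [this, hb]
    · have : (Finset.univ.filter (fun t : Fin n => t = ⟨k, h⟩ ∧ b (f t) = true)) = ∅ := by
        ext t
        simp only [Finset.mem_filter, Finset.mem_univ, true_and, Finset.notMem_empty,
          iff_false, not_and]
        rintro rfl; exact hb
      simp [this, hb]
  · rw [Finset.disjoint_left]
    intro t ht1 ht2
    simp only [Finset.mem_filter, Finset.mem_univ, true_and] at ht1 ht2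
    rw [ht2.1] at ht1
    exact absurd ht1.1 (lt_irrefl k)

/-- cnt agrees on swap and identity for small k -/

lemma cnt_swap_low {n : ℕ} (b : Fin n → Bool) {t0 t1 : Fin n} {k : ℕ}
    (hk : k ≤ t0.val) (hk1 : k ≤ t1.val) :
    cnt b (⇑(Equiv.swap t0 t1)) k = cnt b (⇑(1 : Equiv.Perm (Fin n))) k := by
  unfold cnt
  congr 1
  apply Finset.filter_congr
  intro t _
  by_cases hkt : t.val < k
  · have hne0 : t ≠ t0 := fun h => absurd (h ▸ hkt) (not_lt.mpr hk)
    have hne1 : t ≠ t1 := fun h => absurd (h ▸ hkt) (not_lt.mpr hk1)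
    simp [Equiv.swap_apply_of_ne_of_ne hne0 hne1, hkt]
  · simp [hkt]

/-- cnt agrees on swap and identity for large k -/

lemma cnt_swap_high {n : ℕ} (b : Fin n → Bool) {t0 t1 : Fin n} {k : ℕ}
    (hk : t0.val < k) (hk1 : t1.val < k) :
    cnt b (⇑(Equiv.swap t0 t1)) k = cnt b (⇑(1 : Equiv.Perm (Fin n))) k := by
  unfold cnt
  simp only [Equiv.Perm.coe_one, id_eq]
  apply Finset.card_bij' (s := Finset.univ.filter (fun t : Fin n => t.val < k ∧ b (Equiv.swap t0 t1 t) = true))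
    (t := Finset.univ.filter (fun t : Fin n => t.val < k ∧ b t = true))
    (fun t _ => Equiv.swap t0 t1 t) (fun t _ => Equiv.swap t0 t1 t)
  · intro t ht
    simp only [Finset.mem_filter, Finset.mem_univ, true_and, Equiv.Perm.one_apply] at *
    refine ⟨?_, ht.2⟩
    by_cases h0 : t = t0
    · simpa [h0, Equiv.swap_apply_left] using hk1
    by_cases h1 : t = t1
    · simpa [h1, Equiv.swap_apply_right] using hk
    · simpa [Equiv.swap_apply_of_ne_of_ne h0 h1] using ht.1
  · intro t ht
    simp only [Finset.mem_filter, Finset.mem_univ, true_and, Equiv.Perm.one_apply] at *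
    refine ⟨?_, by simpa [Equiv.swap_apply_self] using ht.2⟩
    by_cases h0 : t = t0
    · simpa [h0, Equiv.swap_apply_left] using hk1
    by_cases h1 : t = t1
    · simpa [h1, Equiv.swap_apply_right] using hk
    · simpa [Equiv.swap_apply_of_ne_of_ne h0 h1] using ht.1
  · intro t _; simp [Equiv.swap_apply_self]
  · intro t _; simp [Equiv.swap_apply_self]

lemma C1_swap_le {n : ℕ} {q : Fin n → ℝ} (hq : ∀ i, 0 ≤ q i ∧ q i ≤ 1) (m β : ℕ)
    {t0 t1 : Fin n} (ht : t1.val = t0.val + 1) (hle : q t0 ≤ q t1) :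
    C1 q m β (Equiv.swap t0 t1) ≤ C1 q m β 1 := by
  have hne : t0 ≠ t1 := by
    intro h; rw [h] at ht; omega
  rw [C1_expand, C1_expand]
  apply Finset.sum_le_sum
  intro k hk
  rw [Finset.mem_range] at hk
  rcases lt_trichotomy k t1.val with hklt | hkeq | hkgt
  · apply le_of_eq
    apply Finset.sum_congr rfl
    intro a _
    rw [cnt_swap_low a (by omega) (le_of_lt hklt)]
  · subst hkeq
    have ht0n : t0.val < n := by omega
    have hfin : (⟨t0.val, ht0n⟩ : Fin n) = t0 := rfl
    have h0 : ∀ a : Fin n → Bool,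
        cnt a (⇑(1 : Equiv.Perm (Fin n))) t1.val = cnt a (⇑(1 : Equiv.Perm (Fin n))) t0.val
          + (if a t0 then 1 else 0) := by
      intro a
      rw [ht, cnt_succ a _ ht0n]
      simp
      exact if_congr Iff.rfl rfl rfl
    have h1 : ∀ a : Fin n → Bool,
        cnt a (⇑(Equiv.swap t0 t1)) t1.val = cnt a (⇑(1 : Equiv.Perm (Fin n))) t0.val
          + (if a t1 then 1 else 0) := by
      intro a
      rw [ht, cnt_succ a _ ht0n, cnt_swap_low a (le_refl _) (by omega)]
      rw [hfin, Equiv.swap_apply_left]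
    set c : (Fin n → Bool) → ℕ := fun a => cnt a (⇑(1 : Equiv.Perm (Fin n))) t0.val with hc
    set blk := Finset.univ.filter (fun a : Fin n → Bool => m ≤ N1 a ∧ N1 a < β) with hblk
    have hgoal : ∑ a ∈ blk, (if c a + (if a t1 then 1 else 0) < m then (1:ℝ) else 0) * pr q a ≤
        ∑ a ∈ blk, (if c a + (if a t0 then 1 else 0) < m then (1:ℝ) else 0) * pr q a := by
      set e : (Fin n → Bool) → (Fin n → Bool) := fun a => a ∘ ⇑(Equiv.swap t0 t1) with he
      have hee : ∀ a, e (e a) = a := by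
        intro a; funext t; simp [he, Equiv.swap_apply_self]
      have heblk : ∀ a ∈ blk, e a ∈ blk := by
        intro a ha
        rw [hblk, Finset.mem_filter] at ha ⊢
        refine ⟨Finset.mem_univ _, ?_⟩
        have hN : N1 (e a) = N1 a := N1_comp a (Equiv.swap t0 t1)
        rw [hN]
        exact ha.2
      have hce : ∀ a, c (e a) = c a := by
        intro a
        show cnt (e a) (⇑(1 : Equiv.Perm (Fin n))) t0.val = cnt a (⇑(1 : Equiv.Perm (Fin n))) t0.val
        unfold cnt
        apply congrArg
        apply Finset.filter_congr
        intro t _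
        by_cases hkt : t.val < t0.val
        · have hne0 : t ≠ t0 := fun h => absurd (h ▸ hkt) (lt_irrefl _)
          have hne1 : t ≠ t1 := fun h => by rw [h] at hkt; omega
          simp [he, Equiv.swap_apply_of_ne_of_ne hne0 hne1, hkt]
        · simp [hkt]
      have he0 : ∀ a, (e a) t0 = a t1 := by
        intro a; simp [he, Equiv.swap_apply_left]
      have he1 : ∀ a, (e a) t1 = a t0 := by
        intro a; simp [he, Equiv.swap_apply_right]
      set D : (Fin n → Bool) → ℝ := fun a =>
        ((if c a + (if a t0 then 1 else 0) < m then (1:ℝ) else 0)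
          - (if c a + (if a t1 then 1 else 0) < m then (1:ℝ) else 0)) * pr q a with hD
      have hsum_e : ∑ a ∈ blk, D (e a) = ∑ a ∈ blk, D a := by
        apply Finset.sum_nbij' e e
        · exact heblk
        · exact heblk
        · intro a _; exact hee a
        · intro a _; exact hee a
        · intro a _; rfl
      have hAB : ∀ a : Fin n → Bool,
          (if c a + 1 < m then (1:ℝ) else 0) ≤ (if c a < m then (1:ℝ) else 0) := by
        intro a
        split_ifs with hA hB
        · exact le_refl _
        · exact absurd (by omega : c a < m) hB
        · norm_num
        · exact le_refl _
      have hpt : ∀ a ∈ blk, 0 ≤ D a + D (e a) := by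
        intro a _
        cases ha0 : a t0 <;> cases ha1 : a t1
        · -- both false
          simp only [hD, hce, he0, he1, ha0, ha1]
          ring_nf
          exact le_refl _
        · -- a t0 = false, a t1 = true
          have hpr : pr q (e a) ≤ pr q a := by
            have hh := pr_swap_le hq hne hle (e a) (by rw [he0, ha1]) (by rw [he1, ha0])
            have h2 : (e a) ∘ ⇑(Equiv.swap t0 t1) = a := hee a
            rwa [h2] at hh
          have hpp := pr_nonneg hq a
          simp only [hD, hce, he0, he1, ha0, ha1, Bool.false_eq_true, if_true, if_false,
            add_zero]
          nlinarith [mul_nonneg (sub_nonneg.mpr (hAB a)) (sub_nonneg.mpr hpr)]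
        · -- a t0 = true, a t1 = false
          have hpr : pr q a ≤ pr q (e a) :=
            pr_swap_le hq hne hle a ha0 ha1
          simp only [hD, hce, he0, he1, ha0, ha1, Bool.false_eq_true, if_true, if_false,
            add_zero]
          nlinarith [mul_nonneg (sub_nonneg.mpr (hAB a)) (sub_nonneg.mpr hpr)]
        · -- both true
          simp only [hD, hce, he0, he1, ha0, ha1]
          ring_nf
          exact le_refl _
      have h2 : 0 ≤ ∑ a ∈ blk, (D a + D (e a)) := Finset.sum_nonneg hpt
      rw [Finset.sum_add_distrib, hsum_e] at h2
      have hDsum : ∑ a ∈ blk, D a =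
          (∑ a ∈ blk, (if c a + (if a t0 then 1 else 0) < m then (1:ℝ) else 0) * pr q a)
          - ∑ a ∈ blk, (if c a + (if a t1 then 1 else 0) < m then (1:ℝ) else 0) * pr q a := by
        rw [← Finset.sum_sub_distrib]
        apply Finset.sum_congr rfl
        intro a _
        simp only [hD]
        ring
      rw [hDsum] at h2
      linarith
    calc ∑ a ∈ blk, (if cnt a (⇑(Equiv.swap t0 t1)) t1.val < m then (1:ℝ) else 0) * pr q a
        = ∑ a ∈ blk, (if c a + (if a t1 then 1 else 0) < m then (1:ℝ) else 0) * pr q a := by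
          apply Finset.sum_congr rfl; intro a _; rw [h1]
      _ ≤ ∑ a ∈ blk, (if c a + (if a t0 then 1 else 0) < m then (1:ℝ) else 0) * pr q a := hgoal
      _ = ∑ a ∈ blk, (if cnt a (⇑(1:Equiv.Perm (Fin n))) t1.val < m then (1:ℝ) else 0) * pr q a := by
          apply Finset.sum_congr rfl; intro a _; rw [h0]
  · apply le_of_eq
    apply Finset.sum_congr rfl
    intro a _
    rw [cnt_swap_high a (by omega) hkgt]

noncomputable def phi {n : ℕ} (q : Fin n → ℝ) : ℝ := ∑ t : Fin n, (t.val : ℝ) * q t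

lemma phi_swap {n : ℕ} (q : Fin n → ℝ) {t0 t1 : Fin n} (ht : t1.val = t0.val + 1) :
    phi (q ∘ ⇑(Equiv.swap t0 t1)) = phi q + (q t0 - q t1) := by
  have hne : t0 ≠ t1 := by intro h; rw [h] at ht; omega
  unfold phi
  have h1 := Equiv.sum_comp (Equiv.swap t0 t1)
    (fun x => ((Equiv.swap t0 t1 x).val : ℝ) * q x)
  simp only [Equiv.swap_apply_self] at h1
  simp only [Function.comp_apply]
  rw [h1]
  have h2 : ∑ x : Fin n, ((Equiv.swap t0 t1 x).val : ℝ) * q x - ∑ x : Fin n, (x.val : ℝ) * q x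
      = ∑ x : Fin n, (((Equiv.swap t0 t1 x).val : ℝ) - x.val) * q x := by
    rw [← Finset.sum_sub_distrib]
    apply Finset.sum_congr rfl
    intros; ring
  have h3 : ∑ x : Fin n, (((Equiv.swap t0 t1 x).val : ℝ) - x.val) * q x
      = ∑ x ∈ ({t0, t1} : Finset (Fin n)), (((Equiv.swap t0 t1 x).val : ℝ) - x.val) * q x := by
    symm
    apply Finset.sum_subset (Finset.subset_univ _)
    intro x _ hx
    simp only [Finset.mem_insert, Finset.mem_singleton, not_or] at hx
    rw [Equiv.swap_apply_of_ne_of_ne hx.1 hx.2]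
    ring
  rw [Finset.sum_pair hne, Equiv.swap_apply_left, Equiv.swap_apply_right] at h3
  have ht' : (t1.val : ℝ) = (t0.val : ℝ) + 1 := by exact_mod_cast ht
  have h4 : ((t1.val : ℝ) - t0.val) * q t0 + ((t0.val : ℝ) - t1.val) * q t1 = q t0 - q t1 := by
    rw [ht']; ring
  linarith [h2, h3, h4]

/-- two antitone rearrangements of each other are equal -/

lemma antitone_unique {n : ℕ} (f g : Fin n → ℝ) (e : Equiv.Perm (Fin n)) (hfg : f = g ∘ e)
    (hf : ∀ s t : Fin n, s ≤ t → f t ≤ f s) (hg : ∀ s t : Fin n, s ≤ t → g t ≤ g s) :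
    f = g := by
  have hperm : (List.ofFn f).Perm (List.ofFn g) := by
    rw [hfg]
    exact Equiv.Perm.ofFn_comp_perm e g
  have hsf : (List.ofFn f).Pairwise (fun x y => y ≤ x) := by
    rw [List.pairwise_ofFn]
    intro s t hst
    exact hf s t (le_of_lt hst)
  have hsg : (List.ofFn g).Pairwise (fun x y => y ≤ x) := by
    rw [List.pairwise_ofFn]
    intro s t hst
    exact hg s t (le_of_lt hst)
  have : IsAntisymm ℝ (fun x y => y ≤ x) := ⟨fun a b h1 h2 => le_antisymm h2 h1⟩
  exact List.ofFn_injective (List.Perm.eq_of_pairwise (fun a b _ _ h1 h2 => le_antisymm h2 h1) hsf hsg hperm)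

/-- adjacent violation -/

lemma exists_adjacent {n : ℕ} (q : Fin n → ℝ)
    (h : ¬ (∀ s t : Fin n, s ≤ t → q t ≤ q s)) :
    ∃ t0 t1 : Fin n, t1.val = t0.val + 1 ∧ q t0 < q t1 := by
  by_contra hc
  push_neg at hc
  apply h
  have step : ∀ t0 t1 : Fin n, t1.val = t0.val + 1 → q t1 ≤ q t0 := by
    intro t0 t1 h01
    exact hc t0 t1 h01
  have key : ∀ d : ℕ, ∀ s : Fin n, ∀ h : s.val + d < n, q ⟨s.val + d, h⟩ ≤ q s := by
    intro d
    induction d with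
    | zero => intro s h; simp
    | succ d ih =>
      intro s h
      have h' : s.val + d < n := by omega
      calc q ⟨s.val + d + 1, h⟩ ≤ q ⟨s.val + d, h'⟩ := step _ _ rfl
        _ ≤ q s := ih s h'
  intro s t hst
  have hst' : s.val ≤ t.val := hst
  have : t = ⟨s.val + (t.val - s.val), by omega⟩ := by
    apply Fin.ext; simp; omega
  rw [this]
  exact key _ s _

theorem stmt0 {n : ℕ} (hn : 1 ≤ n) (p : Fin n → ℝ)
    (hp : ∀ i, 0 < p i ∧ p i < 1)
    (B : ℕ) (hB : 2 ≤ B) (α : ℕ → ℕ)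
    (hα1 : α 1 = 0) (hαtop : α (B + 1) = n + 1)
    (hmono : ∀ j, 1 ≤ j → j ≤ B → α j < α (j + 1))
    (j : ℕ) (hj1 : 1 ≤ j) (hjB : j ≤ B)
    (σ1 : Equiv.Perm (Fin n))
    (hσ1 : ∀ s t : Fin n, s ≤ t → p (σ1 t) ≤ p (σ1 s))
    (σ : Equiv.Perm (Fin n)) :
    C1 p (α j) (α (j + 1)) σ1 ≤ C1 p (α j) (α (j + 1)) σ := by
  classical
  set m := α j with hm
  set β := α (j + 1) with hβ
  have hq : ∀ τ : Equiv.Perm (Fin n), ∀ i, 0 ≤ (p ∘ ⇑τ) i ∧ (p ∘ ⇑τ) i ≤ 1 := by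
    intro τ i
    exact ⟨le_of_lt (hp (τ i)).1, le_of_lt (hp (τ i)).2⟩
  set meas : Equiv.Perm (Fin n) → ℕ := fun τ =>
    (Finset.univ.filter (fun τ' : Equiv.Perm (Fin n) => phi (p ∘ ⇑τ') < phi (p ∘ ⇑τ))).card
    with hmeas
  have key : ∀ N : ℕ, ∀ τ : Equiv.Perm (Fin n), meas τ ≤ N →
      C1 p m β σ1 ≤ C1 p m β τ := by
    intro N
    induction N with
    | zero =>
      intro τ hτ
      by_cases hanti : ∀ s t : Fin n, s ≤ t → (p ∘ ⇑τ) t ≤ (p ∘ ⇑τ) s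
      · have heq : p ∘ ⇑σ1 = p ∘ ⇑τ := by
          apply antitone_unique _ _ (τ⁻¹ * σ1)
          · funext x
            simp [Function.comp_apply, Equiv.Perm.mul_apply]
          · exact hσ1
          · exact hanti
        rw [C1_comp p m β σ1, C1_comp p m β τ, heq]
      · exfalso
        obtain ⟨t0, t1, ht, hlt⟩ := exists_adjacent _ hanti
        have hphi : phi (p ∘ ⇑(τ * Equiv.swap t0 t1)) < phi (p ∘ ⇑τ) := by
          have : p ∘ ⇑(τ * Equiv.swap t0 t1) = (p ∘ ⇑τ) ∘ ⇑(Equiv.swap t0 t1) := by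
            funext x; simp [Equiv.Perm.mul_apply]
          rw [this, phi_swap _ ht]
          linarith
        have hmem : τ * Equiv.swap t0 t1 ∈
            (Finset.univ.filter (fun τ' : Equiv.Perm (Fin n) => phi (p ∘ ⇑τ') < phi (p ∘ ⇑τ))) :=
          Finset.mem_filter.mpr ⟨Finset.mem_univ _, hphi⟩
        have : 0 < meas τ := by
          rw [hmeas]
          exact Finset.card_pos.mpr ⟨_, hmem⟩
        omega
    | succ N ih =>
      intro τ hτ
      by_cases hanti : ∀ s t : Fin n, s ≤ t → (p ∘ ⇑τ) t ≤ (p ∘ ⇑τ) s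
      · have heq : p ∘ ⇑σ1 = p ∘ ⇑τ := by
          apply antitone_unique _ _ (τ⁻¹ * σ1)
          · funext x
            simp [Function.comp_apply, Equiv.Perm.mul_apply]
          · exact hσ1
          · exact hanti
        rw [C1_comp p m β σ1, C1_comp p m β τ, heq]
      · obtain ⟨t0, t1, ht, hlt⟩ := exists_adjacent _ hanti
        have hcomp : p ∘ ⇑(τ * Equiv.swap t0 t1) = (p ∘ ⇑τ) ∘ ⇑(Equiv.swap t0 t1) := by
          funext x; simp [Equiv.Perm.mul_apply]
        have hphi : phi (p ∘ ⇑(τ * Equiv.swap t0 t1)) < phi (p ∘ ⇑τ) := by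
          rw [hcomp, phi_swap _ ht]
          linarith
        have hmeas_lt : meas (τ * Equiv.swap t0 t1) < meas τ := by
          rw [hmeas]
          apply Finset.card_lt_card
          constructor
          · intro x hx
            simp only [Finset.mem_filter, Finset.mem_univ, true_and] at hx ⊢
            exact lt_trans hx hphi
          · intro hsub
            have := hsub (Finset.mem_filter.mpr ⟨Finset.mem_univ _, hphi⟩)
            simp only [Finset.mem_filter, Finset.mem_univ, true_and] at this
            exact absurd this (lt_irrefl _)
        have hstep : C1 p m β (τ * Equiv.swap t0 t1) ≤ C1 p m β τ := by
          rw [C1_comp p m β (τ * Equiv.swap t0 t1), C1_comp p m β τ, hcomp,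
            ← C1_comp (p ∘ ⇑τ) m β (Equiv.swap t0 t1)]
          exact C1_swap_le (hq τ) m β ht (le_of_lt hlt)
        exact le_trans (ih (τ * Equiv.swap t0 t1) (by omega)) hstep
  exact key (meas σ) σ (le_refl _)
end

section
/- Assume unit costs. For every j ∈ {1,…,B} and every full decision tree T over n bits: Σ_{a∈M^j} c₁^j(σ¹,a)·Pr(a) ≤ Σ_{a∈M^j} c₁^j(T,a)·Pr(a), and Σ_{a∈M^j} c₀^j(σ⁰,a)·Pr(a) ≤ Σ_{a∈M^j} c₀^j(T,a)·Pr(a). That is, the fixed permutations σ¹ and σ⁰ are optimal even among all adaptive query orders for observing α_j true bits (respectively n − β_j + 1 false bits) on block M^j. -/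
open Finset

/-- Binary decision trees over `n` bits, with natural-number leaf labels. -/
inductive DTree (n : ℕ) : Type where
  | leaf : ℕ → DTree n
  | node : Fin n → DTree n → DTree n → DTree n

namespace DTree

/-- Output of the tree on assignment `a`. -/
def eval {n : ℕ} : DTree n → (Fin n → Bool) → ℕ
  | .leaf v, _ => v
  | .node i t0 t1, a => if a i then eval t1 a else eval t0 a

/-- Total cost of the queries made on assignment `a`. -/
noncomputable def cost {n : ℕ} (c : Fin n → ℝ) : DTree n → (Fin n → Bool) → ℝ
  | .leaf _, _ => 0
  | .node i t0 t1, a => c i + (if a i then cost c t1 a else cost c t0 a)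

/-- The list of indices queried on assignment `a`, in order. -/
def path {n : ℕ} : DTree n → (Fin n → Bool) → List (Fin n)
  | .leaf _, _ => []
  | .node i t0 t1, a => i :: (if a i then path t1 a else path t0 a)

/-- No index occurs twice on any root-to-leaf path (given already-used indices). -/
def Proper {n : ℕ} : DTree n → Finset (Fin n) → Prop
  | .leaf _, _ => True
  | .node i t0 t1, used =>
      i ∉ used ∧ Proper t0 (insert i used) ∧ Proper t1 (insert i used)

/-- Every root-to-leaf path queries all `n` indices (and no repeats). -/
def Full {n : ℕ} : DTree n → Finset (Fin n) → Prop
  | .leaf _, used => used = Finset.univ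
  | .node i t0 t1, used =>
      i ∉ used ∧ Full t0 (insert i used) ∧ Full t1 (insert i used)

end DTree

namespace ScoreAux

open Finset List

/-! ### Abstract block mass and expected cost -/

/-- Block mass: probability that the number of ones among independent bits with
success probabilities `l` lies in `[L, U)`. -/
noncomputable def BM : List ℝ → ℕ → ℕ → ℝ
  | [], L, U => if L = 0 ∧ 0 < U then 1 else 0
  | q :: l, L, U => q * BM l (L-1) (U-1) + (1-q) * BM l L U

/-- Expected number of queries restricted to the block `[L, U)` of ones-counts,
querying bits with probabilities `l` in order until `m` ones are seen. -/
noncomputable def CC : List ℝ → ℕ → ℕ → ℕ → ℝ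
  | _, 0, _, _ => 0
  | [], _+1, _, _ => 0
  | q :: l, m+1, L, U => BM (q :: l) L U + q * CC l m (L-1) (U-1) + (1-q) * CC l (m+1) L U

lemma CC_zero (l : List ℝ) (L U : ℕ) : CC l 0 L U = 0 := by cases l <;> rfl

lemma CC_nil (m L U : ℕ) : CC [] m L U = 0 := by cases m <;> rfl

lemma BM_nonneg {l : List ℝ} (h : ∀ q ∈ l, 0 ≤ q ∧ q ≤ 1) : ∀ L U, 0 ≤ BM l L U := by
  induction l with
  | nil => intro L U; rw [BM]; split <;> norm_num
  | cons q l ih =>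
    intro L U
    have hq := h q (by simp)
    have hl : ∀ q ∈ l, 0 ≤ q ∧ q ≤ 1 := fun x hx => h x (by simp [hx])
    rw [BM]
    have h1 := ih hl (L-1) (U-1)
    have h2 := ih hl L U
    nlinarith [hq.1, hq.2]

lemma BM_perm {l1 l2 : List ℝ} (h : l1 ~ l2) : ∀ L U, BM l1 L U = BM l2 L U := by
  induction h with
  | nil => intro L U; rfl
  | cons x _ ih => intro L U; rw [BM, BM, ih, ih]
  | swap x y l => intro L U; rw [BM, BM, BM, BM, BM, BM]; ring
  | trans _ _ ih1 ih2 => intro L U; rw [ih1, ih2]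

lemma CC_swap {x y : ℝ} {v : List ℝ} (hx : 0 ≤ x ∧ x ≤ 1) (hy : 0 ≤ y ∧ y ≤ 1)
    (hv : ∀ q ∈ v, 0 ≤ q ∧ q ≤ 1) (hxy : x ≤ y) (m L U : ℕ) :
    CC (y :: x :: v) m L U ≤ CC (x :: y :: v) m L U := by
  match m with
  | 0 => rw [CC_zero, CC_zero]
  | 1 =>
    simp only [CC, CC_zero, BM]
    nlinarith [mul_nonneg (sub_nonneg.2 hxy) (BM_nonneg hv (L-1) (U-1))]
  | (m+2) =>
    apply le_of_eq
    simp only [CC, BM]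
    ring

lemma CC_cons_mono {q : ℝ} (hq : 0 ≤ q ∧ q ≤ 1) {l1 l2 : List ℝ} (hperm : l1 ~ l2)
    (h : ∀ m L U, CC l1 m L U ≤ CC l2 m L U) :
    ∀ m L U, CC (q :: l1) m L U ≤ CC (q :: l2) m L U := by
  intro m L U
  match m with
  | 0 => rw [CC_zero, CC_zero]
  | m+1 =>
    rw [CC, CC, BM_perm (hperm.cons q)]
    have h1 := h m (L-1) (U-1)
    have h2 := h (m+1) L U
    nlinarith [hq.1, hq.2]

lemma CC_orderedInsert {x : ℝ} (hx : 0 ≤ x ∧ x ≤ 1) {v : List ℝ}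
    (hv : ∀ q ∈ v, 0 ≤ q ∧ q ≤ 1) (hs : v.Pairwise (· ≥ ·)) :
    ∀ m L U, CC (List.orderedInsert (· ≥ ·) x v) m L U ≤ CC (x :: v) m L U := by
  induction v with
  | nil => intro m L U; simp [List.orderedInsert]
  | cons y v ih =>
    intro m L U
    by_cases h : x ≥ y
    · simp [List.orderedInsert, h]
    · have hy := hv y (by simp)
      have hv' : ∀ q ∈ v, 0 ≤ q ∧ q ≤ 1 := fun q hq => hv q (by simp [hq])
      have hs' : v.Pairwise (· ≥ ·) := hs.of_cons
      simp only [List.orderedInsert, if_neg h]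
      calc CC (y :: List.orderedInsert (· ≥ ·) x v) m L U
          ≤ CC (y :: x :: v) m L U := by
            refine CC_cons_mono hy (List.perm_orderedInsert _ x v) (ih hv' hs') m L U
        _ ≤ CC (x :: y :: v) m L U :=
            CC_swap hx hy hv' (le_of_not_ge h) m L U

/-! ### Basic lemmas about `stopCount`, `pr` and counting -/

variable {n : ℕ}

/-- number of selected indices in `l` -/
def cnt (l : List (Fin n)) (a : Fin n → Bool) : ℕ := (l.filter a).length

lemma stop_zero (sel : Fin n → Bool) (l : List (Fin n)) : stopCount sel 0 l = 0 := by
  apply Nat.sInf_eq_zero.2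
  exact Or.inl (by simp [Set.mem_setOf_eq])

lemma stop_nil (sel : Fin n → Bool) (m : ℕ) : stopCount sel m [] = 0 := by
  cases m with
  | zero => exact stop_zero sel []
  | succ m =>
    unfold stopCount
    convert Nat.sInf_empty
    ext k
    simp

lemma stop_cons (sel : Fin n → Bool) (m : ℕ) (i : Fin n) (l : List (Fin n))
    (h : m + 1 ≤ ((i :: l).filter sel).length) :
    stopCount sel (m+1) (i :: l) = stopCount sel (m + 1 - (if sel i then 1 else 0)) l + 1 := by
  set S : Set ℕ := {k | m + 1 ≤ (((i :: l).take k).filter sel).length} with hS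
  set S' : Set ℕ := {k | m + 1 - (if sel i then 1 else 0) ≤ ((l.take k).filter sel).length} with hS'
  have hmem : ∀ k, (k + 1 ∈ S) ↔ k ∈ S' := by
    intro k
    simp only [hS, hS', Set.mem_setOf_eq, List.take_succ_cons, List.filter_cons]
    cases hsel : sel i <;> simp <;> omega
  have h0 : (0 : ℕ) ∉ S := by simp [hS, Set.mem_setOf_eq]
  have hne' : S'.Nonempty := by
    refine ⟨l.length, ?_⟩
    simp only [hS', Set.mem_setOf_eq, List.take_length]
    rw [List.filter_cons] at h
    cases hsel : sel i <;> simp [hsel] at h ⊢ <;> omega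
  have hne : S.Nonempty := ⟨sInf S' + 1, (hmem _).2 (Nat.sInf_mem hne')⟩
  have : stopCount sel (m+1) (i :: l) = sInf S := rfl
  rw [this]
  apply _root_.le_antisymm
  · exact Nat.sInf_le ((hmem _).2 (Nat.sInf_mem hne'))
  · apply le_csInf hne
    intro k hk
    match k with
    | 0 => exact absurd hk h0
    | k+1 => exact Nat.succ_le_succ (Nat.sInf_le ((hmem k).1 hk))

lemma stop_congr {sel sel' : Fin n → Bool} {l : List (Fin n)} (m : ℕ)
    (h : ∀ i ∈ l, sel i = sel' i) : stopCount sel m l = stopCount sel' m l := by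
  unfold stopCount
  have hfil : ∀ k, List.filter sel (l.take k) = List.filter sel' (l.take k) :=
    fun k => List.filter_congr (fun x hx => h x (List.take_subset k l hx))
  simp only [hfil]

lemma pr_nonneg {p : Fin n → ℝ} (hp : ∀ i, 0 ≤ p i ∧ p i ≤ 1) (a : Fin n → Bool) :
    0 ≤ pr p a := by
  apply Finset.prod_nonneg
  intro i _
  cases h : a i <;> simp [h] <;> linarith [(hp i).1, (hp i).2]

lemma sum_pr (p : Fin n → ℝ) : ∑ a : Fin n → Bool, pr p a = 1 := by
  unfold pr
  rw [← Fintype.piFinset_univ,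
    ← Finset.prod_univ_sum (fun _ : Fin n => (univ : Finset Bool))
      (fun i b => if b then p i else 1 - p i)]
  simp

/-- Peeling one coordinate off the product measure. -/
lemma sum_coord (p : Fin n → ℝ) (i : Fin n) (b : Bool)
    (g : (Fin n → Bool) → ℝ) (hg : ∀ a c, g (Function.update a i c) = g a) :
    ∑ a ∈ univ.filter (fun a : Fin n → Bool => a i = b), g a * pr p a
      = (if b then p i else 1 - p i) * ∑ a : Fin n → Bool, g a * pr p a := by
  have key : ∀ b' : Bool,
      ∑ a ∈ univ.filter (fun a : Fin n → Bool => a i = b'), g a * pr p a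
        = (if b' then p i else 1 - p i) *
          ∑ a ∈ univ.filter (fun a : Fin n → Bool => a i = true),
            g a * ∏ j ∈ univ.erase i, (if a j then p j else 1 - p j) := by
    intro b'
    have step1 : ∀ a : Fin n → Bool, a i = b' →
        g a * pr p a = (if b' then p i else 1 - p i) *
          (g a * ∏ j ∈ univ.erase i, (if a j then p j else 1 - p j)) := by
      intro a ha
      unfold pr
      rw [← Finset.mul_prod_erase univ _ (Finset.mem_univ i), ha]
      ring
    rw [Finset.sum_congr rfl (fun a ha => step1 a (by simpa using (Finset.mem_filter.1 ha).2)),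
      ← Finset.mul_sum]
    congr 1
    refine Finset.sum_nbij' (fun a => Function.update a i true) (fun a => Function.update a i b')
      ?_ ?_ ?_ ?_ ?_
    · intro a ha; simp
    · intro a ha; simp
    · intro a ha
      simp only [Finset.mem_filter] at ha
      simp only [Function.update_idem]
      rw [← ha.2, Function.update_eq_self]
    · intro a ha
      simp only [Finset.mem_filter] at ha
      simp only [Function.update_idem]
      rw [← ha.2, Function.update_eq_self]
    · intro a ha
      rw [hg]
      congr 1
      apply Finset.prod_congr rfl
      intro j hj
      have : Function.update a i true j = a j := Function.update_of_ne (Finset.ne_of_mem_erase hj) _ _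
      simp only [this]
  have split := Finset.sum_filter_add_sum_filter_not univ (fun a : Fin n → Bool => a i = true)
      (fun a => g a * pr p a)
  have hfalse : (univ.filter (fun a : Fin n → Bool => ¬ a i = true))
      = univ.filter (fun a : Fin n → Bool => a i = false) := by
    apply Finset.filter_congr; intro a _; simp
  have total : ∑ a : Fin n → Bool, g a * pr p a
      = ∑ a ∈ univ.filter (fun a : Fin n → Bool => a i = true),
          g a * ∏ j ∈ univ.erase i, (if a j then p j else 1 - p j) := by
    rw [← split, hfalse, key true, key false]
    simp
    ring
  rw [key b, total]

lemma cnt_update {l : List (Fin n)} {i : Fin n} (h : i ∉ l) (a : Fin n → Bool) (c : Bool) :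
    cnt l (Function.update a i c) = cnt l a := by
  unfold cnt
  rw [List.filter_congr (fun x hx => Function.update_of_ne (fun he => h (by rw [← he]; exact hx)) c a)]

lemma cnt_cons (i : Fin n) (l : List (Fin n)) (a : Fin n → Bool) :
    cnt (i :: l) a = (if a i then 1 else 0) + cnt l a := by
  unfold cnt
  rw [List.filter_cons]
  cases h : a i <;> simp [h] <;> omega

lemma filter_not_true (i : Fin n) :
    (univ.filter (fun a : Fin n → Bool => ¬ a i = true))
      = univ.filter (fun a : Fin n → Bool => a i = false) := by
  apply Finset.filter_congr; intro a _; simp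

/-! ### Correspondence between concrete sums and the abstract quantities -/

lemma BMeq (p : Fin n → ℝ) :
    ∀ l : List (Fin n), l.Nodup → ∀ L U : ℕ,
    ∑ a : Fin n → Bool, (if L ≤ cnt l a ∧ cnt l a < U then (1:ℝ) else 0) * pr p a
      = BM (l.map p) L U := by
  intro l
  induction l with
  | nil =>
    intro _ L U
    simp only [cnt, List.filter_nil, List.length_nil, List.map_nil, BM]
    have hiff : (L ≤ 0 ∧ 0 < U) ↔ (L = 0 ∧ 0 < U) := by omega
    by_cases hc : L ≤ 0 ∧ 0 < U
    · rw [if_pos (hiff.1 hc)]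
      calc ∑ a : Fin n → Bool, (if L ≤ 0 ∧ 0 < U then (1:ℝ) else 0) * pr p a
          = ∑ a : Fin n → Bool, pr p a := by
            apply Finset.sum_congr rfl; intro a _; rw [if_pos hc, one_mul]
        _ = 1 := sum_pr p
    · rw [if_neg (fun hh => hc (hiff.2 hh))]
      apply Finset.sum_eq_zero; intro a _; exact mul_eq_zero_of_left (if_neg hc) _
  | cons i l ih =>
    intro hnd L U
    have hi : i ∉ l := (List.nodup_cons.1 hnd).1
    have hnd' : l.Nodup := (List.nodup_cons.1 hnd).2
    have piece : ∀ b : Bool,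
        ∑ a ∈ univ.filter (fun a : Fin n → Bool => a i = b),
          (if L ≤ cnt (i :: l) a ∧ cnt (i :: l) a < U then (1:ℝ) else 0) * pr p a
        = (if b then p i else 1 - p i) *
            BM (l.map p) (L - (if b then 1 else 0)) (U - (if b then 1 else 0)) := by
      intro b
      have hsum : ∀ a : Fin n → Bool, a i = b →
          (if L ≤ cnt (i :: l) a ∧ cnt (i :: l) a < U then (1:ℝ) else 0)
          = (if L - (if b then 1 else 0) ≤ cnt l a ∧ cnt l a < U - (if b then 1 else 0)
              then (1:ℝ) else 0) := by
        intro a ha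
        have h1 : cnt (i :: l) a = (if b then 1 else 0) + cnt l a := by rw [cnt_cons, ha]
        have hiff : (L ≤ cnt (i :: l) a ∧ cnt (i :: l) a < U)
            ↔ (L - (if b then 1 else 0) ≤ cnt l a ∧ cnt l a < U - (if b then 1 else 0)) := by
          rw [h1]; cases b <;> simp <;> omega
        exact if_congr hiff rfl rfl
      rw [Finset.sum_congr rfl
        (fun a ha => by rw [hsum a (by simpa using (Finset.mem_filter.1 ha).2)])]
      rw [sum_coord p i b _ (fun a c => by simp only [cnt_update hi])]
      rw [ih hnd' (L - (if b then 1 else 0)) (U - (if b then 1 else 0))]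
    rw [← Finset.sum_filter_add_sum_filter_not univ (fun a : Fin n → Bool => a i = true),
      filter_not_true i, piece true, piece false]
    simp only [if_true, if_false, List.map_cons, BM]
    norm_num

lemma SUMeq (p : Fin n → ℝ) :
    ∀ l : List (Fin n), l.Nodup → ∀ m L U : ℕ, m ≤ L →
    ∑ a : Fin n → Bool,
      (if L ≤ cnt l a ∧ cnt l a < U then (stopCount a m l : ℝ) else 0) * pr p a
      = CC (l.map p) m L U := by
  intro l
  induction l with
  | nil =>
    intro _ m L U _
    rw [List.map_nil, CC_nil]
    apply Finset.sum_eq_zero; intro a _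
    rw [stop_nil]
    simp
  | cons i l ih =>
    intro hnd m L U hm
    have hi : i ∉ l := (List.nodup_cons.1 hnd).1
    have hnd' : l.Nodup := (List.nodup_cons.1 hnd).2
    match m with
    | 0 =>
      rw [CC_zero]
      apply Finset.sum_eq_zero; intro a _
      rw [stop_zero]
      simp
    | m+1 =>
      have piece : ∀ b : Bool,
          ∑ a ∈ univ.filter (fun a : Fin n → Bool => a i = b),
            (if L ≤ cnt (i :: l) a ∧ cnt (i :: l) a < U
              then (stopCount a (m+1) (i :: l) : ℝ) else 0) * pr p a
          = (if b then p i else 1 - p i) *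
              (CC (l.map p) (m + 1 - (if b then 1 else 0))
                  (L - (if b then 1 else 0)) (U - (if b then 1 else 0))
                + BM (l.map p) (L - (if b then 1 else 0)) (U - (if b then 1 else 0))) := by
        intro b
        set kb := (if b = true then 1 else 0 : ℕ) with hkb
        have hsum : ∀ a : Fin n → Bool, a i = b →
            (if L ≤ cnt (i :: l) a ∧ cnt (i :: l) a < U
              then (stopCount a (m+1) (i :: l) : ℝ) else 0)
            = (if L - kb ≤ cnt l a ∧ cnt l a < U - kb
                then ((stopCount a (m + 1 - kb) l : ℝ) + 1) else 0) := by
          intro a ha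
          have h1 : cnt (i :: l) a = kb + cnt l a := by rw [cnt_cons, ha, hkb]
          have hiff : (L ≤ cnt (i :: l) a ∧ cnt (i :: l) a < U)
              ↔ (L - kb ≤ cnt l a ∧ cnt l a < U - kb) := by
            rw [h1]; cases b <;> simp [hkb] <;> omega
          by_cases hc : L ≤ cnt (i :: l) a ∧ cnt (i :: l) a < U
          · rw [if_pos hc, if_pos (hiff.1 hc)]
            have hreach : m + 1 ≤ ((i :: l).filter a).length := by
              have : cnt (i :: l) a = ((i :: l).filter a).length := rfl
              omega
            rw [stop_cons a (m) i l hreach, ha, hkb]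
            push_cast
            ring
          · rw [if_neg hc, if_neg (fun hh => hc (hiff.2 hh))]
        rw [Finset.sum_congr rfl
          (fun a ha => by rw [hsum a (by simpa using (Finset.mem_filter.1 ha).2)])]
        rw [sum_coord p i b _ ?_]
        · have expand : ∀ a : Fin n → Bool,
              (if L - kb ≤ cnt l a ∧ cnt l a < U - kb
                then ((stopCount a (m + 1 - kb) l : ℝ) + 1) else 0) * pr p a
              = (if L - kb ≤ cnt l a ∧ cnt l a < U - kb
                  then (stopCount a (m + 1 - kb) l : ℝ) else 0) * pr p a
                + (if L - kb ≤ cnt l a ∧ cnt l a < U - kb then (1:ℝ) else 0) * pr p a := by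
            intro a
            by_cases hc : L - kb ≤ cnt l a ∧ cnt l a < U - kb
            · rw [if_pos hc, if_pos hc, if_pos hc]; ring
            · rw [if_neg hc, if_neg hc, if_neg hc]; ring
          rw [Finset.sum_congr rfl (fun a _ => expand a), Finset.sum_add_distrib,
            ih hnd' (m + 1 - kb) (L - kb) (U - kb) (by cases b <;> simp [hkb] <;> omega),
            BMeq p l hnd' (L - kb) (U - kb)]
        · intro a c
          have h1 : cnt l (Function.update a i c) = cnt l a := cnt_update hi a c
          have h2 : stopCount (Function.update a i c) (m + 1 - kb) l
              = stopCount a (m + 1 - kb) l :=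
            stop_congr _ (fun x hx =>
              Function.update_of_ne (fun he => hi (by rw [← he]; exact hx)) c a)
          simp only [h1, h2]
      rw [← Finset.sum_filter_add_sum_filter_not univ (fun a : Fin n → Bool => a i = true),
        filter_not_true i, piece true, piece false]
      simp only [Bool.false_eq_true, if_true, if_false, List.map_cons, CC, BM, Nat.sub_zero]
      push_cast
      ring

/-! ### Decision trees -/

lemma path_update {t : DTree n} {s : Finset (Fin n)} (h : t.Full s) {i : Fin n} (hi : i ∈ s)
    (a : Fin n → Bool) (c : Bool) : t.path (Function.update a i c) = t.path a := by
  induction t generalizing s with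
  | leaf v => rfl
  | node j t0 t1 ih0 ih1 =>
    obtain ⟨hj, h0, h1⟩ := h
    have hne : j ≠ i := fun he => hj (he ▸ hi)
    have hup : Function.update a i c j = a j := Function.update_of_ne hne c a
    simp only [DTree.path, hup]
    cases ha : a j with
    | false => simp only [Bool.false_eq_true, if_false]
               rw [ih0 h0 (Finset.mem_insert_of_mem hi)]
    | true => simp only [if_true]
              rw [ih1 h1 (Finset.mem_insert_of_mem hi)]

lemma path_mem {t : DTree n} {s : Finset (Fin n)} (h : t.Full s) (a : Fin n → Bool) :
    (t.path a).Nodup ∧ ∀ x, x ∈ t.path a ↔ x ∉ s := by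
  induction t generalizing s with
  | leaf v =>
    refine ⟨List.nodup_nil, fun x => ?_⟩
    have : s = univ := h
    simp [DTree.path, this]
  | node j t0 t1 ih0 ih1 =>
    obtain ⟨hj, h0, h1⟩ := h
    cases ha : a j with
    | false =>
      obtain ⟨hnd, hmem⟩ := ih0 h0
      constructor
      · simp only [DTree.path, ha, Bool.false_eq_true, if_false]
        exact List.nodup_cons.2 ⟨fun hx => ((hmem j).1 hx) (Finset.mem_insert_self j s), hnd⟩
      · intro x
        simp only [DTree.path, ha, Bool.false_eq_true, if_false, List.mem_cons, hmem x,
          Finset.mem_insert]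
        by_cases hxj : x = j
        · subst hxj; simp [hj]
        · simp [hxj]
    | true =>
      obtain ⟨hnd, hmem⟩ := ih1 h1
      constructor
      · simp only [DTree.path, ha, if_true]
        exact List.nodup_cons.2 ⟨fun hx => ((hmem j).1 hx) (Finset.mem_insert_self j s), hnd⟩
      · intro x
        simp only [DTree.path, ha, if_true, List.mem_cons, hmem x, Finset.mem_insert]
        by_cases hxj : x = j
        · subst hxj; simp [hj]
        · simp [hxj]

/-- The tree obtained by negating every query answer. -/
def dflip : DTree n → DTree n
  | .leaf v => .leaf v
  | .node i t0 t1 => .node i (dflip t1) (dflip t0)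

lemma dflip_full {t : DTree n} {s : Finset (Fin n)} (h : t.Full s) : (dflip t).Full s := by
  induction t generalizing s with
  | leaf v => exact h
  | node j t0 t1 ih0 ih1 =>
    obtain ⟨hj, h0, h1⟩ := h
    exact ⟨hj, ih1 h1, ih0 h0⟩

lemma dflip_path (t : DTree n) (b : Fin n → Bool) :
    (dflip t).path b = t.path (fun i => !(b i)) := by
  induction t with
  | leaf v => rfl
  | node j t0 t1 ih0 ih1 =>
    simp only [dflip, DTree.path]
    by_cases hb : b j = true
    · simp [hb, ih0]
    · simp [hb, ih1]

lemma TREEge (p : Fin n → ℝ) (hp : ∀ i, 0 ≤ p i ∧ p i ≤ 1) :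
    ∀ (T : DTree n) (s : Finset (Fin n)), T.Full s →
    ∀ (l : List (Fin n)), l.Nodup → (∀ x, x ∈ l ↔ x ∉ s) →
    ∀ (m L U : ℕ), m ≤ L → ∀ (w : List ℝ), w.Pairwise (· ≥ ·) → w ~ l.map p →
    CC w m L U ≤ ∑ a : Fin n → Bool,
      (if L ≤ cnt l a ∧ cnt l a < U then (stopCount a m (T.path a) : ℝ) else 0) * pr p a := by
  intro T
  induction T with
  | leaf v =>
    intro s hT l hnd hl m L U hm w hws hwp
    have hs : s = univ := hT
    have hlnil : l = [] := by
      apply List.eq_nil_iff_forall_not_mem.2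
      intro x hx
      exact (hl x).1 hx (hs ▸ Finset.mem_univ x)
    subst hlnil
    have hwnil : w = [] := by simpa using hwp
    subst hwnil
    rw [CC_nil]
    apply le_of_eq
    symm
    apply Finset.sum_eq_zero
    intro a _
    have : (DTree.leaf v : DTree n).path a = [] := rfl
    rw [this, stop_nil]
    simp
  | node i t0 t1 ih0 ih1 =>
    intro s hT l hnd hl m L U hm w hws hwp
    obtain ⟨hi, h0, h1⟩ := hT
    match m with
    | 0 =>
      rw [CC_zero]
      apply Finset.sum_nonneg
      intro a _
      apply mul_nonneg _ (pr_nonneg hp a)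
      split
      · exact Nat.cast_nonneg _
      · exact le_refl 0
    | m+1 =>
      have hil : i ∈ l := (hl i).2 hi
      set l' := l.erase i with hl'def
      have hnd' : l'.Nodup := hnd.erase i
      have hpl : l ~ i :: l' := List.perm_cons_erase hil
      have hl' : ∀ x, x ∈ l' ↔ x ∉ insert i s := by
        intro x
        rw [hl'def, List.Nodup.mem_erase_iff hnd, hl x, Finset.mem_insert]
        tauto
      have hinot' : i ∉ l' := fun hx => (hl' i).1 hx (Finset.mem_insert_self i s)
      have hcnt : ∀ a : Fin n → Bool, cnt l a = (if a i then 1 else 0) + cnt l' a := by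
        intro a
        have : cnt l a = cnt (i :: l') a := by
          unfold cnt
          exact (hpl.filter a).length_eq
        rw [this, cnt_cons]
      -- probabilities bounds for lists
      have hwb : ∀ q ∈ (l'.map p), 0 ≤ q ∧ q ≤ 1 := by
        intro q hq
        obtain ⟨x, _, rfl⟩ := List.mem_map.1 hq
        exact hp x
      set w' := List.insertionSort (· ≥ ·) (l'.map p) with hw'def
      have hw's : w'.Pairwise (· ≥ ·) := List.pairwise_insertionSort _ _
      have hw'p : w' ~ l'.map p := List.perm_insertionSort _ _
      have hw'b : ∀ q ∈ w', 0 ≤ q ∧ q ≤ 1 := fun q hq => hwb q (hw'p.mem_iff.1 hq)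
      -- the two subtrees
      have hpath : ∀ (b : Bool) (a : Fin n → Bool),
          (DTree.node i t0 t1).path a = i :: (if a i then t1.path a else t0.path a) := by
        intro b a; rfl
      -- piece lemma
      have piece : ∀ b : Bool,
          ∑ a ∈ univ.filter (fun a : Fin n → Bool => a i = b),
            (if L ≤ cnt l a ∧ cnt l a < U
              then (stopCount a (m+1) ((DTree.node i t0 t1).path a) : ℝ) else 0) * pr p a
          = (if b then p i else 1 - p i) *
              ((∑ a : Fin n → Bool,
                (if L - (if b then 1 else 0) ≤ cnt l' a ∧ cnt l' a < U - (if b then 1 else 0)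
                  then (stopCount a (m + 1 - (if b then 1 else 0))
                    ((if b then t1 else t0).path a) : ℝ) else 0) * pr p a)
               + BM (l'.map p) (L - (if b then 1 else 0)) (U - (if b then 1 else 0))) := by
        intro b
        set kb := (if b = true then 1 else 0 : ℕ) with hkb
        set tb := (if b = true then t1 else t0) with htb
        have htbfull : tb.Full (insert i s) := by
          rw [htb]; cases b
          · simpa using h0
          · simpa using h1
        have hpmem := fun a => path_mem htbfull a
        have hppm : ∀ a : Fin n → Bool, tb.path a ~ l' := by
          intro a
          exact (List.perm_ext_iff_of_nodup (hpmem a).1 hnd').2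
            (fun x => ((hpmem a).2 x).trans (hl' x).symm)
        have hsum : ∀ a : Fin n → Bool, a i = b →
            (if L ≤ cnt l a ∧ cnt l a < U
              then (stopCount a (m+1) ((DTree.node i t0 t1).path a) : ℝ) else 0)
            = (if L - kb ≤ cnt l' a ∧ cnt l' a < U - kb
                then ((stopCount a (m + 1 - kb) (tb.path a) : ℝ) + 1) else 0) := by
          intro a ha
          have hpa : (DTree.node i t0 t1).path a = i :: tb.path a := by
            rw [hpath b a, ha, htb]; cases b <;> simp
          have h1c : cnt l a = kb + cnt l' a := by rw [hcnt a, ha, hkb]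
          have hiff : (L ≤ cnt l a ∧ cnt l a < U)
              ↔ (L - kb ≤ cnt l' a ∧ cnt l' a < U - kb) := by
            rw [h1c]; cases b <;> simp [hkb] <;> omega
          by_cases hc : L ≤ cnt l a ∧ cnt l a < U
          · rw [if_pos hc, if_pos (hiff.1 hc)]
            have hflen : ((i :: tb.path a).filter a).length = cnt l a := by
              have : (i :: tb.path a) ~ i :: l' := (hppm a).cons i
              unfold cnt
              rw [(this.filter a).length_eq, ← (hpl.filter a).length_eq]
            have hreach : m + 1 ≤ ((i :: tb.path a).filter a).length := by omega
            rw [hpa, stop_cons a m i (tb.path a) hreach, ha, hkb]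
            push_cast
            ring
          · rw [if_neg hc, if_neg (fun hh => hc (hiff.2 hh))]
        rw [Finset.sum_congr rfl
          (fun a ha => by rw [hsum a (by simpa using (Finset.mem_filter.1 ha).2)])]
        rw [sum_coord p i b _ ?_]
        · congr 1
          have expand : ∀ a : Fin n → Bool,
              (if L - kb ≤ cnt l' a ∧ cnt l' a < U - kb
                then ((stopCount a (m + 1 - kb) (tb.path a) : ℝ) + 1) else 0) * pr p a
              = (if L - kb ≤ cnt l' a ∧ cnt l' a < U - kb
                  then (stopCount a (m + 1 - kb) (tb.path a) : ℝ) else 0) * pr p a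
                + (if L - kb ≤ cnt l' a ∧ cnt l' a < U - kb then (1:ℝ) else 0) * pr p a := by
            intro a
            by_cases hc : L - kb ≤ cnt l' a ∧ cnt l' a < U - kb
            · rw [if_pos hc, if_pos hc, if_pos hc]; ring
            · rw [if_neg hc, if_neg hc, if_neg hc]; ring
          rw [Finset.sum_congr rfl (fun a _ => expand a), Finset.sum_add_distrib,
            BMeq p l' hnd' (L - kb) (U - kb)]
        · intro a c
          have hc1 : cnt l' (Function.update a i c) = cnt l' a := cnt_update hinot' a c
          have hc2 : tb.path (Function.update a i c) = tb.path a :=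
            path_update htbfull (Finset.mem_insert_self i s) a c
          have hc3 : stopCount (Function.update a i c) (m + 1 - kb) (tb.path a)
              = stopCount a (m + 1 - kb) (tb.path a) := by
            apply stop_congr
            intro x hx
            have hxi : x ≠ i := fun he => hinot' (by
              rw [← he]
              exact ((hppm a).mem_iff).1 hx)
            exact Function.update_of_ne hxi c a
          simp only [hc1, hc2, hc3]
      -- apply IH to both branches
      have hmt : m ≤ L - 1 := by omega
      have ihT : CC w' m (L-1) (U-1) ≤ ∑ a : Fin n → Bool,
          (if L - 1 ≤ cnt l' a ∧ cnt l' a < U - 1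
            then (stopCount a m (t1.path a) : ℝ) else 0) * pr p a :=
        ih1 (insert i s) h1 l' hnd' hl' m (L-1) (U-1) hmt w' hw's hw'p
      have ihF : CC w' (m+1) L U ≤ ∑ a : Fin n → Bool,
          (if L ≤ cnt l' a ∧ cnt l' a < U
            then (stopCount a (m+1) (t0.path a) : ℝ) else 0) * pr p a :=
        ih0 (insert i s) h0 l' hnd' hl' (m+1) L U hm w' hw's hw'p
      -- assemble
      have hsplit : ∑ a : Fin n → Bool,
          (if L ≤ cnt l a ∧ cnt l a < U
            then (stopCount a (m+1) ((DTree.node i t0 t1).path a) : ℝ) else 0) * pr p a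
          = (p i) * ((∑ a : Fin n → Bool,
                (if L - 1 ≤ cnt l' a ∧ cnt l' a < U - 1
                  then (stopCount a m (t1.path a) : ℝ) else 0) * pr p a)
               + BM (l'.map p) (L - 1) (U - 1))
            + (1 - p i) * ((∑ a : Fin n → Bool,
                (if L ≤ cnt l' a ∧ cnt l' a < U
                  then (stopCount a (m+1) (t0.path a) : ℝ) else 0) * pr p a)
               + BM (l'.map p) L U) := by
        rw [← Finset.sum_filter_add_sum_filter_not univ (fun a : Fin n → Bool => a i = true),
          filter_not_true i, piece true, piece false]
        simp only [Bool.false_eq_true, if_true, if_false, Nat.sub_zero, Nat.add_sub_cancel]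
      rw [hsplit]
      have hBMw : ∀ L' U', BM (l'.map p) L' U' = BM w' L' U' :=
        fun L' U' => (BM_perm hw'p L' U').symm
      have step1 : CC (p i :: w') (m+1) L U
          ≤ (p i) * ((∑ a : Fin n → Bool,
                (if L - 1 ≤ cnt l' a ∧ cnt l' a < U - 1
                  then (stopCount a m (t1.path a) : ℝ) else 0) * pr p a)
               + BM (l'.map p) (L - 1) (U - 1))
            + (1 - p i) * ((∑ a : Fin n → Bool,
                (if L ≤ cnt l' a ∧ cnt l' a < U
                  then (stopCount a (m+1) (t0.path a) : ℝ) else 0) * pr p a)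
               + BM (l'.map p) L U) := by
        rw [CC, BM, hBMw (L-1) (U-1), hBMw L U]
        have hpi := hp i
        nlinarith [ihT, ihF, hpi.1, hpi.2]
      refine le_trans ?_ step1
      -- finally : CC w ≤ CC (p i :: w')
      have hwperm : w = List.orderedInsert (· ≥ ·) (p i) w' := by
        apply List.Perm.eq_of_pairwise' hws
        · exact (List.Pairwise.orderedInsert (p i) w' hw's)
        · calc w ~ l.map p := hwp
            _ ~ (i :: l').map p := hpl.map p
            _ = p i :: l'.map p := rfl
            _ ~ p i :: w' := (hw'p.cons (p i)).symm
            _ ~ List.orderedInsert (· ≥ ·) (p i) w' := (List.perm_orderedInsert _ _ _).symm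
      rw [hwperm]
      exact CC_orderedInsert (hp i) hw'b hw's (m+1) L U

/-! ### Glue lemmas -/

lemma cnt_univ (l : List (Fin n)) (hnd : l.Nodup) (hcov : ∀ x : Fin n, x ∈ l)
    (a : Fin n → Bool) : cnt l a = N1 a := by
  unfold cnt N1
  rw [← List.toFinset_card_of_nodup (hnd.filter a)]
  congr 1
  ext x
  simp [List.mem_filter, hcov x]

lemma N1_le (b : Fin n → Bool) : N1 b ≤ n := by
  unfold N1
  calc (univ.filter (fun i => b i = true)).card ≤ (univ : Finset (Fin n)).card :=
        Finset.card_filter_le _ _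
    _ = n := by simp

lemma N1_not (b : Fin n → Bool) : N1 (fun i => !(b i)) = n - N1 b := by
  unfold N1
  have hset : (univ.filter fun i : Fin n => (!(b i)) = true)
      = univ \ (univ.filter fun i : Fin n => b i = true) := by
    rw [← Finset.filter_not]
    apply Finset.filter_congr
    intro i _
    simp
  rw [hset, Finset.card_sdiff_of_subset (Finset.filter_subset _ _)]
  simp

lemma pr_not (p : Fin n → ℝ) (b : Fin n → Bool) :
    pr p (fun i => !(b i)) = pr (fun i => 1 - p i) b := by
  unfold pr
  apply Finset.prod_congr rfl
  intro i _
  cases h : b i <;> simp [h] <;> ring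

/-- Bit-flipping equivalence on assignments. -/
def flipE : (Fin n → Bool) ≃ (Fin n → Bool) where
  toFun a := fun i => !(a i)
  invFun a := fun i => !(a i)
  left_inv a := by funext i; simp
  right_inv a := by funext i; simp

/-- Main general optimality result: a nonincreasing fixed order is optimal among
all full decision trees, on any block, for any threshold `m ≤ L`. -/
lemma genOpt (p : Fin n → ℝ) (hp : ∀ i, 0 ≤ p i ∧ p i ≤ 1) (σ : Equiv.Perm (Fin n))
    (hσ : ((List.ofFn (fun t => σ t)).map p).Pairwise (· ≥ ·))
    (T : DTree n) (hT : T.Full ∅) (m L U : ℕ) (hm : m ≤ L) :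
    ∑ a ∈ Finset.univ.filter (fun a : Fin n → Bool => L ≤ N1 a ∧ N1 a < U),
        (stopCount a m (List.ofFn (fun t => σ t)) : ℝ) * pr p a
    ≤ ∑ a ∈ Finset.univ.filter (fun a : Fin n → Bool => L ≤ N1 a ∧ N1 a < U),
        (stopCount a m (T.path a) : ℝ) * pr p a := by
  classical
  set lσ := List.ofFn (fun t => σ t) with hlσ
  have hnd : lσ.Nodup := List.nodup_ofFn.2 (Equiv.injective σ)
  have hcov : ∀ x, x ∈ lσ := fun x => (List.mem_ofFn).2 ⟨σ.symm x, by simp⟩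
  have hN1 : ∀ a : Fin n → Bool, cnt lσ a = N1 a := fun a => cnt_univ lσ hnd hcov a
  have conv : ∀ (Fp : (Fin n → Bool) → List (Fin n)),
      (∑ a ∈ Finset.univ.filter (fun a : Fin n → Bool => L ≤ N1 a ∧ N1 a < U),
        (stopCount a m (Fp a) : ℝ) * pr p a)
      = ∑ a : Fin n → Bool,
          (if L ≤ cnt lσ a ∧ cnt lσ a < U then (stopCount a m (Fp a) : ℝ) else 0) * pr p a := by
    intro Fp
    rw [Finset.sum_filter]
    apply Finset.sum_congr rfl
    intro a _
    simp only [hN1 a, ite_mul, zero_mul]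
  rw [conv (fun _ => lσ), conv (fun a => T.path a)]
  calc ∑ a : Fin n → Bool,
        (if L ≤ cnt lσ a ∧ cnt lσ a < U then (stopCount a m lσ : ℝ) else 0) * pr p a
      = CC (lσ.map p) m L U := SUMeq p lσ hnd m L U hm
    _ ≤ ∑ a : Fin n → Bool,
        (if L ≤ cnt lσ a ∧ cnt lσ a < U then (stopCount a m (T.path a) : ℝ) else 0) * pr p a :=
        TREEge p hp T ∅ hT lσ hnd (fun x => by simp [hcov x]) m L U hm (lσ.map p) hσ
          (List.Perm.refl _)

/-- Converting the "count the zeros" problem to a "count the ones" problem by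
flipping all bits. -/
lemma flipSum (p : Fin n → ℝ) (αj β : ℕ) (hαn : αj ≤ n)
    (F G : (Fin n → Bool) → List (Fin n)) (hFG : ∀ b, F (fun i => !(b i)) = G b) :
    ∑ a ∈ Finset.univ.filter (fun a : Fin n → Bool => αj ≤ N1 a ∧ N1 a < β),
      (stopCount (fun i => !(a i)) (n+1-β) (F a) : ℝ) * pr p a
    = ∑ b ∈ Finset.univ.filter
        (fun b : Fin n → Bool => n+1-β ≤ N1 b ∧ N1 b < n+1-αj),
      (stopCount b (n+1-β) (G b) : ℝ) * pr (fun i => 1 - p i) b := by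
  rw [Finset.sum_filter, Finset.sum_filter]
  refine Fintype.sum_equiv flipE _ _ ?_
  intro a
  have hEa : (flipE a : Fin n → Bool) = fun i => !(a i) := rfl
  have hinv : (fun i => !((flipE a) i)) = a := by funext i; simp [hEa]
  have hN : N1 (flipE a) = n - N1 a := by rw [hEa]; exact N1_not a
  have hcond : (αj ≤ N1 a ∧ N1 a < β) ↔ (n+1-β ≤ N1 (flipE a) ∧ N1 (flipE a) < n+1-αj) := by
    rw [hN]
    have := N1_le a
    omega
  have hG : G (flipE a) = F a := by
    have := hFG (flipE a)
    rw [hinv] at this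
    exact this.symm
  have hpr : pr p a = pr (fun i => 1 - p i) (flipE a) := by
    rw [← pr_not p (flipE a), hinv]
  rw [hG, hpr]
  exact if_congr hcond rfl rfl

end ScoreAux

theorem stmt3 {n : ℕ} (hn : 1 ≤ n) (p : Fin n → ℝ)
    (hp : ∀ i, 0 < p i ∧ p i < 1)
    (B : ℕ) (hB : 2 ≤ B) (α : ℕ → ℕ)
    (hα1 : α 1 = 0) (hαtop : α (B + 1) = n + 1)
    (hmono : ∀ j, 1 ≤ j → j ≤ B → α j < α (j + 1))
    (j : ℕ) (hj1 : 1 ≤ j) (hjB : j ≤ B)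
    (σ1 σ0 : Equiv.Perm (Fin n))
    (hσ1 : ∀ s t : Fin n, s ≤ t → p (σ1 t) ≤ p (σ1 s))
    (hσ0 : ∀ s t : Fin n, s ≤ t → p (σ0 s) ≤ p (σ0 t))
    (T : DTree n) (hT : T.Full ∅) :
    (∑ a ∈ Finset.univ.filter (fun a : Fin n → Bool => α j ≤ N1 a ∧ N1 a < α (j + 1)),
        (stopCount a (α j) (List.ofFn (fun t => σ1 t)) : ℝ) * pr p a
      ≤ ∑ a ∈ Finset.univ.filter (fun a : Fin n → Bool => α j ≤ N1 a ∧ N1 a < α (j + 1)),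
        (stopCount a (α j) (T.path a) : ℝ) * pr p a) ∧
    (∑ a ∈ Finset.univ.filter (fun a : Fin n → Bool => α j ≤ N1 a ∧ N1 a < α (j + 1)),
        (stopCount (fun i => !a i) (n + 1 - α (j + 1)) (List.ofFn (fun t => σ0 t)) : ℝ) * pr p a
      ≤ ∑ a ∈ Finset.univ.filter (fun a : Fin n → Bool => α j ≤ N1 a ∧ N1 a < α (j + 1)),
        (stopCount (fun i => !a i) (n + 1 - α (j + 1)) (T.path a) : ℝ) * pr p a) := by
  classical
  have hp' : ∀ i, 0 ≤ p i ∧ p i ≤ 1 := fun i => ⟨(hp i).1.le, (hp i).2.le⟩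
  have hchain : ∀ d k, 1 ≤ k → k + d = B + 1 → α k ≤ α (B+1) := by
    intro d
    induction d with
    | zero =>
      intro k h1 h2
      have hk : k = B + 1 := by omega
      rw [hk]
    | succ d ih =>
      intro k h1 h2
      have hkB : k ≤ B := by omega
      exact le_trans (le_of_lt (hmono k h1 hkB)) (ih (k+1) (by omega) (by omega))
  have hβn : α (j+1) ≤ n + 1 := by
    have := hchain (B + 1 - (j+1)) (j+1) (by omega) (by omega)
    rw [hαtop] at this
    exact this
  have hαn : α j ≤ n := by
    have := hmono j hj1 hjB
    omega
  constructor
  · have hsorted : ((List.ofFn (fun t => σ1 t)).map p).Pairwise (· ≥ ·) := by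
      rw [List.map_ofFn, List.pairwise_ofFn]
      intro s t hst
      exact hσ1 s t hst.le
    exact ScoreAux.genOpt p hp' σ1 hsorted T hT (α j) (α j) (α (j+1)) le_rfl
  · have hsorted : ((List.ofFn (fun t => σ0 t)).map (fun i => 1 - p i)).Pairwise (· ≥ ·) := by
      rw [List.map_ofFn, List.pairwise_ofFn]
      intro s t hst
      have := hσ0 s t hst.le
      simp only [Function.comp]
      exact sub_le_sub_left this 1
    have hp2 : ∀ i, 0 ≤ 1 - p i ∧ 1 - p i ≤ 1 :=
      fun i => ⟨by linarith [(hp i).2], by linarith [(hp i).1]⟩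
    have e1 := ScoreAux.flipSum p (α j) (α (j+1)) hαn
      (fun _ => List.ofFn (fun t => σ0 t)) (fun _ => List.ofFn (fun t => σ0 t)) (fun b => rfl)
    have e2 := ScoreAux.flipSum p (α j) (α (j+1)) hαn
      (fun a => T.path a) (fun b => (ScoreAux.dflip T).path b)
      (fun b => (ScoreAux.dflip_path T b).symm)
    rw [e1, e2]
    exact ScoreAux.genOpt (fun i => 1 - p i) hp2 σ0 hsorted (ScoreAux.dflip T)
      (ScoreAux.dflip_full hT) (n+1-α (j+1)) (n+1-α (j+1)) (n+1-α j) le_rfl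
end
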